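/- If v ∈ S_n contains the increasing pattern 12⋯(k+1) (i.e., there exist i₁ < ⋯ < i_{k+1} with v(i₁) < ⋯ < v(i_{k+1})), then Γ([v, w₀]) contains a (k+1)×(k+1) square region, i.e., there exist r, c such that [r, r+k] × [c, c+k] ⊆ Γ([v,w₀]). -/

import Mathlib

open Equiv Finset
open scoped Classical

/-- Bruhat order on the symmetric group on `Fin n`, via the rank-matrix
characterization: `v ≤ w` iff every northeast corner count of `v` is at most
that of `w`. -/
def bruhatLE {n : ℕ} (v w : Equiv.Perm (Fin n)) : Prop :=
  ∀ i j : Fin n,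
    (Finset.univ.filter fun k => k ≤ i ∧ j ≤ v k).card ≤
      (Finset.univ.filter fun k => k ≤ i ∧ j ≤ w k).card

/-- Coxeter length = number of inversions. -/
def len {n : ℕ} (v : Equiv.Perm (Fin n)) : ℕ :=
  (Finset.univ.filter fun p : Fin n × Fin n => p.1 < p.2 ∧ v p.2 < v p.1).card

/-- The graph of the Bruhat interval `[v, w]`. -/
def grInt {n : ℕ} (v w : Equiv.Perm (Fin n)) : Set (Fin n × Fin n) :=
  {p | ∃ u : Equiv.Perm (Fin n), bruhatLE v u ∧ bruhatLE u w ∧ u p.1 = p.2}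

/-- `Q` contains an `m × m` square region. -/
def hasSquare {n : ℕ} (Q : Set (Fin n × Fin n)) (m : ℕ) : Prop :=
  ∃ r c : ℕ, r + m ≤ n ∧ c + m ≤ n ∧
    ∀ i j : Fin n, r ≤ (i : ℕ) → (i : ℕ) < r + m → c ≤ (j : ℕ) → (j : ℕ) < c + m →
      (i, j) ∈ Q

lemma bruhatLE_refl {n : ℕ} (v : Equiv.Perm (Fin n)) : bruhatLE v v :=
  fun _ _ => le_rfl

lemma bruhatLE_trans {n : ℕ} {u v w : Equiv.Perm (Fin n)}
    (h1 : bruhatLE u v) (h2 : bruhatLE v w) : bruhatLE u w :=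
  fun i j => (h1 i j).trans (h2 i j)

/-- Multiplying by a transposition of a non-inversion raises in Bruhat order. -/
lemma bruhatLE_mul_swap {n : ℕ} (w : Equiv.Perm (Fin n)) {x y : Fin n}
    (hxy : x < y) (hw : w x < w y) : bruhatLE w (w * Equiv.swap x y) := by
  intro i j
  set u : Equiv.Perm (Fin n) := w * Equiv.swap x y with hu
  have hux : u x = w y := by simp [hu, Equiv.Perm.mul_apply]
  have huy : u y = w x := by simp [hu, Equiv.Perm.mul_apply]
  have huk : ∀ k, k ≠ x → k ≠ y → u k = w k := by
    intro k h1 h2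
    simp [hu, Equiv.Perm.mul_apply, Equiv.swap_apply_of_ne_of_ne h1 h2]
  by_cases hyi : y ≤ i
  · -- both x and y are ≤ i : cardinalities are equal, via the bijection swap x y
    have hxi : x ≤ i := le_of_lt (lt_of_lt_of_le hxy hyi)
    apply le_of_eq
    apply Finset.card_bij' (fun k _ => Equiv.swap x y k) (fun k _ => Equiv.swap x y k)
    · intro k hk
      simp only [Finset.mem_filter, Finset.mem_univ, true_and] at hk ⊢
      constructor
      · by_cases h1 : k = x
        · subst h1; rw [Equiv.swap_apply_left]; exact hyi
        by_cases h2 : k = y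
        · subst h2; rw [Equiv.swap_apply_right]; exact hxi
        · rw [Equiv.swap_apply_of_ne_of_ne h1 h2]; exact hk.1
      · have : u (Equiv.swap x y k) = w k := by
          simp [hu, Equiv.Perm.mul_apply]
        rw [this]; exact hk.2
    · intro k hk
      simp only [Finset.mem_filter, Finset.mem_univ, true_and] at hk ⊢
      constructor
      · by_cases h1 : k = x
        · subst h1; rw [Equiv.swap_apply_left]; exact hyi
        by_cases h2 : k = y
        · subst h2; rw [Equiv.swap_apply_right]; exact hxi
        · rw [Equiv.swap_apply_of_ne_of_ne h1 h2]; exact hk.1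
      · have : w (Equiv.swap x y k) = u k := by
          by_cases h1 : k = x
          · subst h1; rw [Equiv.swap_apply_left, hux]
          by_cases h2 : k = y
          · subst h2; rw [Equiv.swap_apply_right, huy]
          · rw [Equiv.swap_apply_of_ne_of_ne h1 h2, huk k h1 h2]
        rw [this]; exact hk.2
    · intro k _; exact Equiv.swap_apply_self x y k
    · intro k _; exact Equiv.swap_apply_self x y k
  · by_cases hxi : x ≤ i
    · -- x ≤ i < y : subset
      apply Finset.card_le_card
      intro k hk
      simp only [Finset.mem_filter, Finset.mem_univ, true_and] at hk ⊢
      refine ⟨hk.1, ?_⟩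
      have hky : k ≠ y := fun h => hyi (h ▸ hk.1)
      by_cases h1 : k = x
      · subst h1; rw [hux]; exact le_of_lt (lt_of_le_of_lt hk.2 hw)
      · rw [huk k h1 hky]; exact hk.2
    · -- i < x < y : filters are equal
      apply le_of_eq
      apply congrArg Finset.card
      apply Finset.filter_congr
      intro k _
      constructor
      · rintro ⟨h1, h2⟩
        have hkx : k ≠ x := fun h => hxi (h ▸ h1)
        have hky : k ≠ y := fun h => hyi (h ▸ h1)
        exact ⟨h1, by rw [huk k hkx hky]; exact h2⟩
      · rintro ⟨h1, h2⟩
        have hkx : k ≠ x := fun h => hxi (h ▸ h1)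
        have hky : k ≠ y := fun h => hyi (h ▸ h1)
        exact ⟨h1, by rw [← huk k hkx hky]; exact h2⟩

/-- `Fin.revPerm` is the maximum for Bruhat order. -/
lemma bruhatLE_revPerm {n : ℕ} (u : Equiv.Perm (Fin n)) :
    bruhatLE u Fin.revPerm := by
  intro i j
  have hR : (Finset.univ.filter fun k : Fin n => k ≤ i ∧ j ≤ Fin.revPerm k) =
      Finset.Iic (min i j.rev) := by
    ext k
    simp only [Finset.mem_filter, Finset.mem_univ, true_and, Finset.mem_Iic,
      le_min_iff, Fin.revPerm_apply]
    rw [Fin.le_rev_iff]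
  rw [hR, Fin.card_Iic]
  have h1 : (Finset.univ.filter fun k : Fin n => k ≤ i ∧ j ≤ u k).card ≤ (i : ℕ) + 1 := by
    calc (Finset.univ.filter fun k : Fin n => k ≤ i ∧ j ≤ u k).card
        ≤ (Finset.Iic i).card := by
          apply Finset.card_le_card
          intro k hk
          simp only [Finset.mem_filter, Finset.mem_univ, true_and] at hk
          exact Finset.mem_Iic.mpr hk.1
      _ = (i : ℕ) + 1 := Fin.card_Iic i
  have h2 : (Finset.univ.filter fun k : Fin n => k ≤ i ∧ j ≤ u k).card ≤ (j.rev : ℕ) + 1 := by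
    calc (Finset.univ.filter fun k : Fin n => k ≤ i ∧ j ≤ u k).card
        ≤ (Finset.Iic j.rev).card := by
          apply Finset.card_le_card_of_injOn (fun k => (u k).rev)
          · intro k hk
            simp only [Finset.mem_coe, Finset.mem_filter, Finset.mem_univ, true_and] at hk
            exact Finset.mem_Iic.mpr (Fin.rev_le_rev.mpr hk.2)
          · intro a _ b _ hab
            exact u.injective (Fin.rev_injective hab)
      _ = (j.rev : ℕ) + 1 := Fin.card_Iic j.rev
  have : (min i j.rev : Fin n) = min i j.rev := rfl
  rcases min_cases i j.rev with ⟨hm, _⟩ | ⟨hm, _⟩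
  · rw [hm]; exact h1
  · rw [hm]; exact h2

/-- Sandwiching: if `a ≤ i ≤ b` and `v a ≤ j ≤ v b` then there is `u ≥ v`
with `u i = j`. -/
lemma exists_ge_of_sandwich {n : ℕ} (v : Equiv.Perm (Fin n)) {a b i j : Fin n}
    (hai : a ≤ i) (hib : i ≤ b) (haj : v a ≤ j) (hjb : j ≤ v b) :
    ∃ u : Equiv.Perm (Fin n), bruhatLE v u ∧ u i = j := by
  set s := v⁻¹ j with hs
  have hvs : v s = j := by simp [hs]
  rcases lt_trichotomy j (v i) with hj | hj | hj
  · -- j < v i : use a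
    have hsi : s ≠ i := fun h => absurd (h ▸ hvs) (ne_of_gt hj)
    rcases lt_or_gt_of_ne hsi with hsl | hsr
    · refine ⟨v * Equiv.swap s i, bruhatLE_mul_swap v hsl (by rw [hvs]; exact hj), ?_⟩
      simp [Equiv.Perm.mul_apply, hvs]
    · -- s > i : two swaps via a
      have hai' : a < i := by
        rcases lt_or_eq_of_le hai with h | h
        · exact h
        · exfalso; rw [h] at haj; exact absurd haj (not_le.mpr hj)
      have hja : v a < j := by
        rcases lt_or_eq_of_le haj with h | h
        · exact h
        · exfalso
          have : a = s := v.injective (by rw [hvs, ← h])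
          rw [this] at hai'
          exact absurd (lt_trans hai' hsr) (lt_irrefl s)
      have has : a < s := lt_trans hai' hsr
      set v1 := v * Equiv.swap a s with hv1
      have hv1a : v1 a = j := by simp [hv1, Equiv.Perm.mul_apply, hvs]
      have hv1i : v1 i = v i := by
        simp [hv1, Equiv.Perm.mul_apply,
          Equiv.swap_apply_of_ne_of_ne (ne_of_gt hai') (ne_of_lt hsr)]
      have step1 : bruhatLE v v1 := bruhatLE_mul_swap v has (by rw [hvs]; exact hja)
      refine ⟨v1 * Equiv.swap a i, bruhatLE_trans step1
        (bruhatLE_mul_swap v1 hai' (by rw [hv1a, hv1i]; exact hj)), ?_⟩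
      simp [Equiv.Perm.mul_apply, hv1a]
  · exact ⟨v, bruhatLE_refl v, hj.symm⟩
  · -- v i < j : use b
    have hsi : s ≠ i := fun h => by rw [h] at hvs; exact absurd hvs (ne_of_lt hj)
    rcases lt_or_gt_of_ne hsi with hsl | hsr
    · -- s < i : two swaps via b
      have hib' : i < b := by
        rcases lt_or_eq_of_le hib with h | h
        · exact h
        · exfalso; rw [h] at hj; exact absurd hjb (not_le.mpr hj)
      have hjb' : j < v b := by
        rcases lt_or_eq_of_le hjb with h | h
        · exact h
        · exfalso
          have : s = b := v.injective (by rw [hvs, h])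
          rw [this] at hsl
          exact absurd (lt_trans hsl hib') (lt_irrefl b)
      have hsb : s < b := lt_trans hsl hib'
      set v1 := v * Equiv.swap s b with hv1
      have hv1b : v1 b = j := by simp [hv1, Equiv.Perm.mul_apply, hvs]
      have hv1i : v1 i = v i := by
        simp [hv1, Equiv.Perm.mul_apply,
          Equiv.swap_apply_of_ne_of_ne (ne_of_gt hsl) (ne_of_lt hib')]
      have step1 : bruhatLE v v1 := bruhatLE_mul_swap v hsb (by rw [hvs]; exact hjb')
      refine ⟨v1 * Equiv.swap i b, bruhatLE_trans step1
        (bruhatLE_mul_swap v1 hib' (by rw [hv1b, hv1i]; exact hj)), ?_⟩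
      simp [Equiv.Perm.mul_apply, hv1b]
    · refine ⟨v * Equiv.swap i s, bruhatLE_mul_swap v hsr (by rw [hvs]; exact hj), ?_⟩
      simp [Equiv.Perm.mul_apply, hvs]

/-- If `v` contains the increasing pattern `12⋯(k+1)`, then `Γ([v, w₀])`
contains a `(k+1) × (k+1)` square region. -/
theorem hasSquare_of_increasing_pattern {n k : ℕ} (v : Equiv.Perm (Fin n))
    (h : ∃ f : Fin (k + 1) → Fin n, StrictMono f ∧
      StrictMono (fun a => v (f a))) :
    hasSquare (grInt v Fin.revPerm) (k + 1) := by
  obtain ⟨f, hf, hg⟩ := h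
  set a : Fin n := f 0 with ha
  set b : Fin n := f (Fin.last k) with hb
  -- growth: (f 0 : ℕ) + k ≤ f (last k) and similarly for values
  have growth : ∀ (F : Fin (k+1) → Fin n), StrictMono F →
      ∀ t : Fin (k+1), (F 0 : ℕ) + (t : ℕ) ≤ (F t : ℕ) := by
    intro F hF t
    induction t using Fin.induction with
    | zero => simp
    | succ m ih =>
      have h1 : (F m.castSucc : ℕ) < (F m.succ : ℕ) := hF (Fin.castSucc_lt_succ : m.castSucc < m.succ)
      have := ih
      simp only [Fin.coe_castSucc] at this
      simp only [Fin.val_succ]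
      omega
  have hfa : (a : ℕ) + k ≤ (b : ℕ) := by
    have := growth f hf (Fin.last k)
    simpa [ha, hb] using this
  have hga : (v a : ℕ) + k ≤ (v b : ℕ) := by
    have := growth (fun t => v (f t)) hg (Fin.last k)
    simpa [ha, hb] using this
  refine ⟨(a : ℕ), (v a : ℕ), ?_, ?_, ?_⟩
  · have := b.isLt; omega
  · have := (v b).isLt; omega
  · intro i j hri hri' hcj hcj'
    have hai : a ≤ i := by rw [Fin.le_def]; exact hri
    have hib : i ≤ b := by rw [Fin.le_def]; omega
    have haj : v a ≤ j := by rw [Fin.le_def]; exact hcj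
    have hjb : j ≤ v b := by rw [Fin.le_def]; omega
    obtain ⟨u, hvu, hui⟩ := exists_ge_of_sandwich v hai hib haj hjb
    exact ⟨u, hvu, bruhatLE_revPerm u, hui⟩
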